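/- Let D be a finitely generated free abelian group and S a D-graded commutative ring which possesses a homogeneous unit of degree d for every d ∈ D. Then there is an S_0-algebra isomorphism S ≅ S_0[D] (the group algebra AddMonoidAlgebra S_0 D) which carries S_d onto S_0·χ^d for every d ∈ D. In particular, S is a free S_0-module and the grading is trivialized over S_0. -/

import Mathlib

section Aux

open DirectSum

variable {D S : Type*} [AddCommGroup D] [DecidableEq D] [CommRing S]
variable (𝒜 : D → AddSubgroup S) [GradedRing 𝒜]

/-- The inverse of a homogeneous unit of degree `d` is homogeneous of degree `-d`. -/
theorem aux_inv_mem {d : D} (u : Sˣ) (hu : (u : S) ∈ 𝒜 d) :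
    ((u⁻¹ : Sˣ) : S) ∈ 𝒜 (-d) := by
  classical
  set v : S := ((u⁻¹ : Sˣ) : S) with hv
  have hvd : ∀ e : D, e ≠ -d → (DirectSum.decompose 𝒜 v e : S) = 0 := by
    intro e he
    have h1 : (DirectSum.decompose 𝒜 ((u : S) * v) (d + e) : S) =
        (u : S) * (DirectSum.decompose 𝒜 v e : S) :=
      DirectSum.coe_decompose_mul_add_of_left_mem 𝒜 hu
    have h2 : (u : S) * v = 1 := u.mul_inv
    rw [h2] at h1
    have hne : (0 : D) ≠ d + e := by
      intro h
      exact he (eq_neg_of_add_eq_zero_right h.symm)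
    have h3 : (DirectSum.decompose 𝒜 (1 : S) (d + e) : S) = 0 :=
      DirectSum.decompose_of_mem_ne 𝒜 (SetLike.one_mem_graded 𝒜) hne
    rw [h3] at h1
    exact (Units.mul_right_eq_zero u).mp h1.symm
  have hvv : v = (DirectSum.decompose 𝒜 v (-d) : S) := by
    conv_lhs => rw [← DirectSum.sum_support_decompose 𝒜 v]
    rw [Finset.sum_eq_single (-d)]
    · intro e _ he
      exact hvd e he
    · intro h
      simpa using (DFinsupp.notMem_support_iff.mp h)
  rw [hvv]
  exact SetLike.coe_mem _

end Aux

/-- Let `D` be a finitely generated free abelian group and `S` a `D`-graded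
commutative ring possessing a homogeneous unit of degree `d` for every `d ∈ D`.  Then there
is an `S_0`-algebra isomorphism `S ≅ S_0[D]` carrying `S_d` onto `S_0 · χ^d` for every `d`;
in particular the grading is trivialized over `S_0`. -/
theorem stmt_10 {D S : Type*} [AddCommGroup D] [AddGroup.FG D] [Module.Free ℤ D]
    [DecidableEq D] [CommRing S]
    (𝒜 : D → AddSubgroup S) [GradedRing 𝒜]
    (hunits : ∀ d : D, ∃ u : Sˣ, (u : S) ∈ 𝒜 d) :
    ∃ e : S ≃+* AddMonoidAlgebra (𝒜 0) D,
      (∀ a : (𝒜 0), e (a : S) = AddMonoidAlgebra.single (0 : D) a) ∧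
      ∀ (d : D) (s : S), s ∈ 𝒜 d ↔ ∃ a : (𝒜 0), e s = AddMonoidAlgebra.single d a := by
  classical
  choose u hu using hunits
  -- a basis of D over ℤ
  set b := Module.Free.chooseBasis ℤ D with hb
  -- the group homomorphism `D → Sˣ` extending `i ↦ u (b i)`
  set f : D →+ Additive Sˣ :=
    (Finsupp.liftAddHom fun i => zmultiplesHom (Additive Sˣ)
      (Additive.ofMul (u (b i)))).comp b.repr.toLinearMap.toAddMonoidHom with hf
  set χ : Multiplicative D →* Sˣ := AddMonoidHom.toMultiplicativeLeft f with hχdef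
  -- χ maps degree d to a unit in 𝒜 d
  have hχ : ∀ d : D, ((χ (Multiplicative.ofAdd d) : Sˣ) : S) ∈ 𝒜 d := by
    set H : AddSubgroup D :=
      { carrier := {d : D | ((χ (Multiplicative.ofAdd d) : Sˣ) : S) ∈ 𝒜 d}
        zero_mem' := by
          have h1 : χ (Multiplicative.ofAdd (0 : D)) = 1 := map_one χ
          simp only [Set.mem_setOf_eq, h1, Units.val_one]
          exact SetLike.one_mem_graded 𝒜
        add_mem' := by
          intro x y hx hy
          have h1 : χ (Multiplicative.ofAdd (x + y)) =
              χ (Multiplicative.ofAdd x) * χ (Multiplicative.ofAdd y) := map_mul χ _ _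
          simp only [Set.mem_setOf_eq, h1, Units.val_mul]
          exact SetLike.mul_mem_graded hx hy
        neg_mem' := by
          intro x hx
          have h1 : χ (Multiplicative.ofAdd (-x)) = (χ (Multiplicative.ofAdd x))⁻¹ := by
            rw [show Multiplicative.ofAdd (-x) = (Multiplicative.ofAdd x)⁻¹ from rfl, map_inv]
          simp only [Set.mem_setOf_eq, h1]
          exact aux_inv_mem 𝒜 _ hx } with hH
    have hbase : ∀ i, b i ∈ H := by
      intro i
      have h1 : f (b i) = Additive.ofMul (u (b i)) := by
        rw [hf]
        simp only [AddMonoidHom.comp_apply, LinearMap.toAddMonoidHom_coe,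
          LinearEquiv.coe_coe, Module.Basis.repr_self]
        rw [Finsupp.liftAddHom_apply_single]
        simp [zmultiplesHom]
      have h2 : χ (Multiplicative.ofAdd (b i)) = u (b i) := by
        rw [hχdef]
        simp only [AddMonoidHom.toMultiplicativeLeft, Equiv.coe_fn_mk, MonoidHom.coe_mk,
          OneHom.coe_mk]
        show Additive.toMul (f (b i)) = u (b i)
        exact congrArg Additive.toMul h1
      show ((χ (Multiplicative.ofAdd (b i)) : Sˣ) : S) ∈ 𝒜 (b i)
      rw [h2]
      exact hu (b i)
    intro d
    have htop : AddSubgroup.toIntSubmodule H = ⊤ := by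
      rw [eq_top_iff, ← b.span_eq, Submodule.span_le]
      rintro _ ⟨i, rfl⟩
      exact hbase i
    have : d ∈ AddSubgroup.toIntSubmodule H := htop ▸ Submodule.mem_top
    exact this
  -- the ring hom `(𝒜 0) →+* S`
  set f0 : (𝒜 0) →+* S :=
    { toFun := Subtype.val
      map_one' := rfl
      map_mul' := fun _ _ => rfl
      map_zero' := rfl
      map_add' := fun _ _ => rfl } with hf0
  set φ : AddMonoidAlgebra (𝒜 0) D →+* S :=
    AddMonoidAlgebra.liftNCRingHom f0 ((Units.coeHom S).comp χ)
      (fun _ _ => Commute.all _ _) with hφ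
  have hφsingle : ∀ (d : D) (a : (𝒜 0)),
      φ (AddMonoidAlgebra.single d a) = (a : S) * ((χ (Multiplicative.ofAdd d) : Sˣ) : S) := by
    intro d a
    rw [hφ]
    exact AddMonoidAlgebra.liftNC_single _ _ _ _
  -- key computation of components
  have key : ∀ (p : AddMonoidAlgebra (𝒜 0) D) (e : D),
      (DirectSum.decompose 𝒜 (φ p) e : S)
        = ((p.coeff e : S)) * ((χ (Multiplicative.ofAdd e) : Sˣ) : S) := by
    intro p
    induction p using AddMonoidAlgebra.induction_linear with
    | zero => intro e; simp
    | add p q hp hq =>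
      intro e
      have hpe : (p + q).coeff e = p.coeff e + q.coeff e := Finsupp.add_apply p.coeff q.coeff e
      rw [map_add, DirectSum.decompose_add, DirectSum.add_apply, hpe]
      push_cast
      rw [hp e, hq e, add_mul]
    | single d a =>
      intro e
      rw [hφsingle]
      have hmem : (a : S) * ((χ (Multiplicative.ofAdd d) : Sˣ) : S) ∈ 𝒜 d := by
        have := SetLike.mul_mem_graded a.2 (hχ d)
        rwa [zero_add] at this
      by_cases hde : d = e
      · subst hde
        rw [DirectSum.decompose_of_mem_same 𝒜 hmem]
        simp [AddMonoidAlgebra.coeff_single]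
      · rw [DirectSum.decompose_of_mem_ne 𝒜 hmem hde]
        rw [show ((AddMonoidAlgebra.single d a : AddMonoidAlgebra (𝒜 0) D).coeff e) = 0 from
          Finsupp.single_eq_of_ne' hde]
        simp
  have hinj : Function.Injective φ := by
    rw [injective_iff_map_eq_zero]
    intro p hp
    refine AddMonoidAlgebra.ext (Finsupp.ext fun e => Subtype.ext ?_)
    have h1 := key p e
    rw [hp] at h1
    simp only [DirectSum.decompose_zero, DirectSum.zero_apply, ZeroMemClass.coe_zero] at h1
    have h2 : ((p.coeff e : S)) = 0 :=
      (Units.mul_left_eq_zero (χ (Multiplicative.ofAdd e))).mp h1.symm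
    simp only [AddMonoidAlgebra.coeff_zero, Finsupp.zero_apply, ZeroMemClass.coe_zero]
    exact h2
  have hsurj : Function.Surjective φ := by
    intro s
    induction s using DirectSum.Decomposition.inductionOn 𝒜 with
    | zero => exact ⟨0, map_zero φ⟩
    | @homogeneous d x =>
      set w : Sˣ := χ (Multiplicative.ofAdd d) with hw
      have hmem : (x : S) * ((w⁻¹ : Sˣ) : S) ∈ 𝒜 0 := by
        have := SetLike.mul_mem_graded x.2 (aux_inv_mem 𝒜 w (hχ d))
        rwa [add_neg_cancel] at this
      refine ⟨AddMonoidAlgebra.single d ⟨(x : S) * ((w⁻¹ : Sˣ) : S), hmem⟩, ?_⟩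
      rw [hφsingle]
      show (x : S) * ((w⁻¹ : Sˣ) : S) * (w : S) = x
      exact Units.inv_mul_cancel_right (x : S) w
    | add x y hx hy =>
      obtain ⟨p, rfl⟩ := hx
      obtain ⟨q, rfl⟩ := hy
      exact ⟨p + q, map_add φ p q⟩
  set E : AddMonoidAlgebra (𝒜 0) D ≃+* S := RingEquiv.ofBijective φ ⟨hinj, hsurj⟩ with hE
  have hEapp : ∀ p, E p = φ p := fun _ => rfl
  refine ⟨E.symm, ?_, ?_⟩
  · intro a
    have h2 : E (AddMonoidAlgebra.single (0 : D) a) = (a : S) := by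
      rw [hEapp, hφsingle]
      have h1 : χ (Multiplicative.ofAdd (0 : D)) = 1 := map_one χ
      rw [h1, Units.val_one, mul_one]
    rw [← h2, RingEquiv.symm_apply_apply]
  · intro d s
    constructor
    · intro hs
      set w : Sˣ := χ (Multiplicative.ofAdd d) with hw
      have hmem : s * ((w⁻¹ : Sˣ) : S) ∈ 𝒜 0 := by
        have := SetLike.mul_mem_graded hs (aux_inv_mem 𝒜 w (hχ d))
        rwa [add_neg_cancel] at this
      refine ⟨⟨s * ((w⁻¹ : Sˣ) : S), hmem⟩, ?_⟩
      have h2 : E (AddMonoidAlgebra.single d (⟨s * ((w⁻¹ : Sˣ) : S), hmem⟩ : (𝒜 0))) = s := by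
        rw [hEapp, hφsingle]
        show s * ((w⁻¹ : Sˣ) : S) * (w : S) = s
        exact Units.inv_mul_cancel_right s w
      conv_lhs => rw [← h2]
      rw [RingEquiv.symm_apply_apply]
    · rintro ⟨a, ha⟩
      have h2 : E (AddMonoidAlgebra.single d a) = s := by
        rw [← ha, RingEquiv.apply_symm_apply]
      rw [hEapp, hφsingle] at h2
      rw [← h2]
      have := SetLike.mul_mem_graded a.2 (hχ d)
      rwa [zero_add] at this
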